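/- arXiv:1708.02609 — 6 statements merged into one kernel-verified Lean document; each statement's English description precedes it below -/
import Mathlib

section
/- Let (V1, V2) be a pair of commuting isometries on H with V = V1 V2, W = ker V*, W1 = ker V1*, W2 = ker V2*. Then the map U on W defined by U(η1 ⊕ V1 η2) = V2 η1 ⊕ η2 for η1 ∈ W1, η2 ∈ W2 (with respect to W = W1 ⊕ V1 W2 and W = V2 W1 ⊕ W2) is a unitary operator on W. -/
open ContinuousLinearMap Filter Topology Metric
open scoped InnerProductSpace

open Classical in
/-- Orthogonal projection onto a subspace, as an operator on the ambient space. -/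
noncomputable def projCLM {H : Type*} [NormedAddCommGroup H] [InnerProductSpace ℂ H]
    (K : Submodule ℂ H) : H →L[ℂ] H :=
  if h : K.HasOrthogonalProjection then K.subtypeL.comp (@Submodule.orthogonalProjectionOnto ℂ H _ _ _ K h)
  else 0

theorem stmt_5 {H : Type*} [NormedAddCommGroup H] [InnerProductSpace ℂ H] [CompleteSpace H]
    (V1 V2 : H →L[ℂ] H) (hV1 : ∀ x, ‖V1 x‖ = ‖x‖) (hV2 : ∀ x, ‖V2 x‖ = ‖x‖)
    (hcomm : V1 ∘L V2 = V2 ∘L V1)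
    (V : H →L[ℂ] H) (hV : V = V1 ∘L V2)
    (W W1 W2 : Submodule ℂ H)
    (hW : W = LinearMap.ker (adjoint V : H →ₗ[ℂ] H))
    (hW1 : W1 = LinearMap.ker (adjoint V1 : H →ₗ[ℂ] H))
    (hW2 : W2 = LinearMap.ker (adjoint V2 : H →ₗ[ℂ] H)) :
    ∃ U : W ≃ₗᵢ[ℂ] W, ∀ η1 ∈ W1, ∀ η2 ∈ W2, ∀ hm : η1 + V1 η2 ∈ W,
      (U ⟨η1 + V1 η2, hm⟩ : H) = V2 η1 + η2 := by
  have hA1c : adjoint V1 ∘L V1 = 1 := (V1.norm_map_iff_adjoint_comp_self).mp hV1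
  have hA2c : adjoint V2 ∘L V2 = 1 := (V2.norm_map_iff_adjoint_comp_self).mp hV2
  have h1 : ∀ x, adjoint V1 (V1 x) = x := fun x => by
    have := congrArg (fun T : H →L[ℂ] H => T x) hA1c
    simpa using this
  have h2 : ∀ x, adjoint V2 (V2 x) = x := fun x => by
    have := congrArg (fun T : H →L[ℂ] H => T x) hA2c
    simpa using this
  -- membership characterizations
  have hker : ∀ x : H, x ∈ W ↔ adjoint V2 (adjoint V1 x) = 0 := fun x => by
    rw [hW, LinearMap.mem_ker, hV, adjoint_comp]
    simp
  have hker' : ∀ x : H, x ∈ W ↔ adjoint V1 (adjoint V2 x) = 0 := fun x => by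
    rw [hW, LinearMap.mem_ker, hV, hcomm, adjoint_comp]
    simp
  have hk1 : ∀ x : H, x ∈ W1 ↔ adjoint V1 x = 0 := fun x => by
    rw [hW1, LinearMap.mem_ker, ContinuousLinearMap.coe_coe]
  have hk2 : ∀ x : H, x ∈ W2 ↔ adjoint V2 x = 0 := fun x => by
    rw [hW2, LinearMap.mem_ker, ContinuousLinearMap.coe_coe]
  -- the operators
  set T : H →L[ℂ] H := V2 ∘L (1 - V1 ∘L adjoint V1) + adjoint V1 with hTdef
  set S : H →L[ℂ] H := adjoint V2 + V1 ∘L (1 - V2 ∘L adjoint V2) with hSdef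
  have hTx : ∀ x, T x = V2 (x - V1 (adjoint V1 x)) + adjoint V1 x := fun x => by
    simp [hTdef]
  have hSx : ∀ x, S x = adjoint V2 x + V1 (x - V2 (adjoint V2 x)) := fun x => by
    simp [hSdef]
  -- key formulas
  have hTform : ∀ η1 η2 : H, adjoint V1 η1 = 0 → T (η1 + V1 η2) = V2 η1 + η2 := by
    intro η1 η2 ha
    rw [hTx]
    simp [map_add, ha, h1]
  have hSform : ∀ ξ1 ξ2 : H, adjoint V2 ξ2 = 0 → S (V2 ξ1 + ξ2) = ξ1 + V1 ξ2 := by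
    intro ξ1 ξ2 hb
    rw [hSx]
    simp [map_add, hb, h2]
  -- decomposition of elements of W
  have hdec1 : ∀ x : H, x ∈ W →
      adjoint V1 (x - V1 (adjoint V1 x)) = 0 ∧ adjoint V2 (adjoint V1 x) = 0 ∧
        (x - V1 (adjoint V1 x)) + V1 (adjoint V1 x) = x := by
    intro x hx
    refine ⟨by simp [map_sub, h1], (hker x).mp hx, by abel⟩
  have hdec2 : ∀ x : H, x ∈ W →
      adjoint V1 (adjoint V2 x) = 0 ∧ adjoint V2 (x - V2 (adjoint V2 x)) = 0 ∧
        V2 (adjoint V2 x) + (x - V2 (adjoint V2 x)) = x := by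
    intro x hx
    refine ⟨(hker' x).mp hx, by simp [map_sub, h2], by abel⟩
  -- T maps W to W
  have hTW : ∀ x : H, x ∈ W → T x ∈ W := by
    intro x hx
    obtain ⟨a1, a2, hx'⟩ := hdec1 x hx
    rw [hker']
    rw [← hx', hTform _ _ a1]
    simp [map_add, h2, a1, a2]
  -- S maps W to W
  have hSW : ∀ x : H, x ∈ W → S x ∈ W := by
    intro x hx
    obtain ⟨b1, b2, hx'⟩ := hdec2 x hx
    rw [hker]
    rw [← hx', hSform _ _ b2]
    simp [map_add, h1, b1, b2]
  -- mutual inverses on W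
  have hST : ∀ x : H, x ∈ W → S (T x) = x := by
    intro x hx
    obtain ⟨a1, a2, hx'⟩ := hdec1 x hx
    conv_lhs => rw [← hx', hTform _ _ a1, hSform _ _ a2]
    exact hx'
  have hTS : ∀ x : H, x ∈ W → T (S x) = x := by
    intro x hx
    obtain ⟨b1, b2, hx'⟩ := hdec2 x hx
    conv_lhs => rw [← hx', hSform _ _ b2, hTform _ _ b1]
    exact hx'
  -- norm preservation on W
  have hTnorm : ∀ x : H, x ∈ W → ‖T x‖ = ‖x‖ := by
    intro x hx
    obtain ⟨a1, a2, hx'⟩ := hdec1 x hx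
    set η1 := x - V1 (adjoint V1 x) with hη1
    set η2 := adjoint V1 x with hη2
    have i1 : ⟪η1, V1 η2⟫_ℂ = 0 := by
      rw [← adjoint_inner_left, a1, inner_zero_left]
    have i2 : ⟪V2 η1, η2⟫_ℂ = 0 := by
      rw [← adjoint_inner_right, a2, inner_zero_right]
    have n1 : ‖x‖ ^ 2 = ‖η1‖ ^ 2 + ‖η2‖ ^ 2 := by
      rw [← hx', norm_add_sq (𝕜 := ℂ), i1, hV1]
      simp
    have n2 : ‖T x‖ ^ 2 = ‖η1‖ ^ 2 + ‖η2‖ ^ 2 := by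
      rw [← hx', hTform _ _ a1, norm_add_sq (𝕜 := ℂ), i2, hV2]
      simp
    have : ‖T x‖ ^ 2 = ‖x‖ ^ 2 := by rw [n1, n2]
    exact (sq_eq_sq₀ (norm_nonneg _) (norm_nonneg _)).mp this
  -- build the unitary
  refine ⟨{ toFun := fun w => ⟨T w, hTW w w.2⟩
            invFun := fun w => ⟨S w, hSW w w.2⟩
            map_add' := fun a b => by ext; simp [map_add]
            map_smul' := fun c a => by ext; simp
            left_inv := fun w => Subtype.ext (hST w w.2)
            right_inv := fun w => Subtype.ext (hTS w w.2)
            norm_map' := fun w => hTnorm w w.2 }, ?_⟩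
  intro η1 hm1 η2 hm2 hm
  exact hTform η1 η2 ((hk1 η1).mp hm1)
end

section
/- Let (V1, V2) be commuting isometries on H, V = V1V2, W = ker V*, W1 = ker V1*, W2 = ker V2*. Then P_W V1 = V1 P_{W2} and P_W V2 = V2 P_{W1}, where P_S denotes the orthogonal projection onto S. -/
open ContinuousLinearMap Filter Topology Metric
open scoped InnerProductSpace

lemma projCLM_ker_adjoint {H : Type*} [NormedAddCommGroup H] [InnerProductSpace ℂ H]
    [CompleteSpace H] (T : H →L[ℂ] H) (hT : adjoint T ∘L T = 1) :
    projCLM (LinearMap.ker (adjoint T : H →ₗ[ℂ] H)) = 1 - T ∘L adjoint T := by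
  have hTT : ∀ x, adjoint T (T x) = x := fun x => by
    have := congrArg (fun f => f x) hT; simpa using this
  have hinst : Submodule.HasOrthogonalProjection (LinearMap.ker (adjoint T : H →ₗ[ℂ] H)) := inferInstance
  ext x
  simp only [projCLM, dif_pos hinst, comp_apply, Submodule.subtypeL_apply, sub_apply, ContinuousLinearMap.one_apply]
  rw [← Submodule.starProjection_apply]
  apply Submodule.eq_starProjection_of_mem_orthogonal
  · simp [LinearMap.mem_ker, map_sub, hTT]
  · have : x - (x - T (adjoint T x)) = T (adjoint T x) := by abel
    rw [this]
    intro y hy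
    rw [LinearMap.mem_ker] at hy
    rw [← adjoint_inner_left]
    simp [show adjoint T y = 0 from hy]

theorem stmt_6 {H : Type*} [NormedAddCommGroup H] [InnerProductSpace ℂ H] [CompleteSpace H]
    (V1 V2 : H →L[ℂ] H) (hV1 : ∀ x, ‖V1 x‖ = ‖x‖) (hV2 : ∀ x, ‖V2 x‖ = ‖x‖)
    (hcomm : V1 ∘L V2 = V2 ∘L V1)
    (V : H →L[ℂ] H) (hV : V = V1 ∘L V2)
    (W W1 W2 : Submodule ℂ H)
    (hW : W = LinearMap.ker (adjoint V : H →ₗ[ℂ] H))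
    (hW1 : W1 = LinearMap.ker (adjoint V1 : H →ₗ[ℂ] H))
    (hW2 : W2 = LinearMap.ker (adjoint V2 : H →ₗ[ℂ] H)) :
    projCLM W ∘L V1 = V1 ∘L projCLM W2 ∧ projCLM W ∘L V2 = V2 ∘L projCLM W1 := by
  have h1 : adjoint V1 ∘L V1 = 1 := (norm_map_iff_adjoint_comp_self V1).mp hV1
  have h2 : adjoint V2 ∘L V2 = 1 := (norm_map_iff_adjoint_comp_self V2).mp hV2
  have hV' : ∀ x, ‖V x‖ = ‖x‖ := fun x => by rw [hV]; simp [hV1, hV2]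
  have h : adjoint V ∘L V = 1 := (norm_map_iff_adjoint_comp_self V).mp hV'
  have h1' : ∀ x, adjoint V1 (V1 x) = x := fun x => by
    have := congrArg (fun f => f x) h1; simpa using this
  have h2' : ∀ x, adjoint V2 (V2 x) = x := fun x => by
    have := congrArg (fun f => f x) h2; simpa using this
  have hcomm' : ∀ x, V1 (V2 x) = V2 (V1 x) := fun x => by
    have := congrArg (fun f => f x) hcomm; simpa using this
  have hadV : ∀ x, adjoint V x = adjoint V2 (adjoint V1 x) := fun x => by
    rw [hV, adjoint_comp]; simp
  have hadV' : ∀ x, adjoint V x = adjoint V1 (adjoint V2 x) := fun x => by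
    rw [hV, hcomm, adjoint_comp]; simp
  rw [hW, hW1, hW2, projCLM_ker_adjoint V h, projCLM_ker_adjoint V1 h1,
    projCLM_ker_adjoint V2 h2]
  constructor
  · ext x
    simp only [comp_apply, sub_apply, one_apply, map_sub]
    rw [hadV, h1', hV]
    simp
  · ext x
    simp only [comp_apply, sub_apply, ContinuousLinearMap.one_apply, map_sub]
    rw [hadV', h2', hV, comp_apply, hcomm']
end

section
/- Let (V1, V2) be a pair of commuting isometries on H with wandering subspaces W1 = ker V1* and W2 = ker V2*. Then the following are equivalent: (i) (V1, V2) is doubly commuting, i.e., V1*V2 = V2V1*; (ii) V2 W1 ⊆ W1; (iii) V1 W2 ⊆ W2. -/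
open ContinuousLinearMap Filter Topology Metric
open scoped InnerProductSpace

/-- Key step: if `A` is an isometry commuting with `B` and `B` preserves `ker A*`,
then `A* B = B A*`. -/
lemma aux_dc {H : Type*} [NormedAddCommGroup H] [InnerProductSpace ℂ H] [CompleteSpace H]
    (A B : H →L[ℂ] H) (hA : adjoint A ∘L A = 1) (hcomm : A ∘L B = B ∘L A)
    (h : ∀ x, adjoint A x = 0 → adjoint A (B x) = 0) :
    adjoint A ∘L B = B ∘L adjoint A := by
  ext x
  set a := adjoint A x with ha
  have hw : adjoint A (x - A a) = 0 := by
    have : adjoint A (A a) = a := by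
      have := congrArg (fun T => T a) hA
      simpa using this
    simp [map_sub, this]
    exact sub_eq_zero.mpr ha.symm
  have hx : x = A a + (x - A a) := by abel
  have h1 : adjoint A (B (A a)) = B a := by
    have hBA : B (A a) = A (B a) := by
      have := congrArg (fun T => T a) hcomm
      simpa using this.symm
    rw [hBA]
    have := congrArg (fun T => T (B a)) hA
    simpa using this
  have h2 : adjoint A (B (x - A a)) = 0 := h _ hw
  calc (adjoint A ∘L B) x = adjoint A (B (A a + (x - A a))) := by rw [← hx]; rfl
    _ = adjoint A (B (A a)) + adjoint A (B (x - A a)) := by rw [map_add, map_add]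
    _ = B a + 0 := by rw [h1, h2]
    _ = (B ∘L adjoint A) x := by simp [ha]

theorem stmt_11 {H : Type*} [NormedAddCommGroup H] [InnerProductSpace ℂ H] [CompleteSpace H]
    (V1 V2 : H →L[ℂ] H) (hV1 : ∀ x, ‖V1 x‖ = ‖x‖) (hV2 : ∀ x, ‖V2 x‖ = ‖x‖)
    (hcomm : V1 ∘L V2 = V2 ∘L V1)
    (W1 W2 : Submodule ℂ H)
    (hW1 : W1 = LinearMap.ker (adjoint V1 : H →ₗ[ℂ] H))
    (hW2 : W2 = LinearMap.ker (adjoint V2 : H →ₗ[ℂ] H)) :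
    (adjoint V1 ∘L V2 = V2 ∘L adjoint V1 ↔ ∀ x ∈ W1, V2 x ∈ W1) ∧
    (adjoint V1 ∘L V2 = V2 ∘L adjoint V1 ↔ ∀ x ∈ W2, V1 x ∈ W2) := by
  have h1 : adjoint V1 ∘L V1 = 1 := (norm_map_iff_adjoint_comp_self V1).mp hV1
  have h2 : adjoint V2 ∘L V2 = 1 := (norm_map_iff_adjoint_comp_self V2).mp hV2
  subst hW1 hW2
  constructor
  · constructor
    · intro hD x hx
      simp only [LinearMap.mem_ker, ContinuousLinearMap.coe_coe] at hx ⊢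
      have := congrArg (fun T => T x) hD
      simp only [comp_apply] at this
      rw [this, hx, map_zero]
    · intro h
      exact aux_dc V1 V2 h1 hcomm (fun x hx => by
        have := h x (by simpa [LinearMap.mem_ker] using hx)
        simpa [LinearMap.mem_ker] using this)
  · constructor
    · intro hD x hx
      simp only [LinearMap.mem_ker, ContinuousLinearMap.coe_coe] at hx ⊢
      have hD' : adjoint V2 ∘L V1 = V1 ∘L adjoint V2 := by
        have := congrArg adjoint hD
        simpa [adjoint_comp] using this
      have := congrArg (fun T => T x) hD'
      simp only [comp_apply] at this
      rw [this, hx, map_zero]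
    · intro h
      have hD' : adjoint V2 ∘L V1 = V1 ∘L adjoint V2 :=
        aux_dc V2 V1 h2 hcomm.symm (fun x hx => by
          have := h x (by simpa [LinearMap.mem_ker] using hx)
          simpa [LinearMap.mem_ker] using this)
      have := congrArg adjoint hD'
      simpa [adjoint_comp] using this
end

section
/- Let (V1, V2) be commuting isometries on H with defect operator C(V1,V2) = I − V1V1* − V2V2* + V1V2V1*V2*. Then the following are equivalent: (a) C(V1,V2) ≥ 0; (b) V2 W1 ⊆ W1; (c) (V1,V2) is doubly commuting; (d) C(V1,V2) is an orthogonal projection; (e) the fringe operator F2 = P_{W1}V2|_{W1} is an isometry. -/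
open ContinuousLinearMap Filter Topology Metric
open scoped InnerProductSpace

lemma aux_adj_self {H : Type*} [NormedAddCommGroup H] [InnerProductSpace ℂ H] [CompleteSpace H]
    (V : H →L[ℂ] H) (hV : ∀ x, ‖V x‖ = ‖x‖) : ∀ x, adjoint V (V x) = x := by
  intro x
  have hi : ∀ y z : H, ⟪V y, V z⟫_ℂ = ⟪y, z⟫_ℂ := fun y z =>
    LinearIsometry.inner_map_map ⟨(V : H →ₗ[ℂ] H), hV⟩ y z
  apply ext_inner_right ℂ
  intro y
  rw [adjoint_inner_left, hi]

set_option maxHeartbeats 1000000 in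
theorem stmt_15 {H : Type*} [NormedAddCommGroup H] [InnerProductSpace ℂ H] [CompleteSpace H]
    (V1 V2 : H →L[ℂ] H) (hV1 : ∀ x, ‖V1 x‖ = ‖x‖) (hV2 : ∀ x, ‖V2 x‖ = ‖x‖)
    (hcomm : V1 ∘L V2 = V2 ∘L V1)
    (C : H →L[ℂ] H)
    (hCdef : C = 1 - V1 ∘L adjoint V1 - V2 ∘L adjoint V2
        + V1 ∘L V2 ∘L adjoint V1 ∘L adjoint V2)
    (W1 W2 : Submodule ℂ H)
    (hW1 : W1 = LinearMap.ker (adjoint V1 : H →ₗ[ℂ] H))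
    (hW2 : W2 = LinearMap.ker (adjoint V2 : H →ₗ[ℂ] H)) :
    [ C.IsPositive,
      ∀ x ∈ W1, V2 x ∈ W1,
      adjoint V1 ∘L V2 = V2 ∘L adjoint V1,
      IsSelfAdjoint C ∧ IsIdempotentElem C,
      ∀ η ∈ W1, ‖projCLM W1 (V2 η)‖ = ‖η‖ ].TFAE := by
  -- pointwise relations
  have a1v1 : ∀ x, adjoint V1 (V1 x) = x := aux_adj_self V1 hV1
  have a2v2 : ∀ x, adjoint V2 (V2 x) = x := aux_adj_self V2 hV2
  have hc : ∀ x, V1 (V2 x) = V2 (V1 x) := fun x => DFunLike.congr_fun hcomm x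
  have hadjcomm : adjoint V2 ∘L adjoint V1 = adjoint V1 ∘L adjoint V2 := by
    rw [← adjoint_comp, ← adjoint_comp, hcomm]
  have ha : ∀ x, adjoint V2 (adjoint V1 x) = adjoint V1 (adjoint V2 x) :=
    fun x => DFunLike.congr_fun hadjcomm x
  have hmem : ∀ x, x ∈ W1 ↔ adjoint V1 x = 0 := by
    intro x; rw [hW1]; exact LinearMap.mem_ker
  have hCapply : ∀ x, C x
      = x - V1 (adjoint V1 x) - V2 (adjoint V2 x) + V1 (V2 (adjoint V1 (adjoint V2 x))) := by
    intro x; rw [hCdef]; rfl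
  -- the quadratic form of C
  have hinner : ∀ x, RCLike.re ⟪C x, x⟫_ℂ
      = ‖x‖ ^ 2 - ‖adjoint V1 x‖ ^ 2 - ‖adjoint V2 x‖ ^ 2
        + ‖adjoint V1 (adjoint V2 x)‖ ^ 2 := by
    intro x
    rw [hCapply, inner_add_left, inner_sub_left, inner_sub_left,
      ← adjoint_inner_right V1 (adjoint V1 x) x,
      ← adjoint_inner_right V2 (adjoint V2 x) x,
      ← adjoint_inner_right V1 (V2 (adjoint V1 (adjoint V2 x))) x,
      ← adjoint_inner_right V2 (adjoint V1 (adjoint V2 x)) (adjoint V1 x),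
      ha]
    simp only [map_sub, map_add]
    rw [inner_self_eq_norm_sq, inner_self_eq_norm_sq, inner_self_eq_norm_sq,
      inner_self_eq_norm_sq]
  -- C is always self-adjoint
  have e1 : ∀ w y : H, ⟪V1 w, y⟫_ℂ = ⟪w, adjoint V1 y⟫_ℂ :=
    fun w y => (adjoint_inner_right V1 w y).symm
  have e2 : ∀ w y : H, ⟪V2 w, y⟫_ℂ = ⟪w, adjoint V2 y⟫_ℂ :=
    fun w y => (adjoint_inner_right V2 w y).symm
  have f1 : ∀ w y : H, ⟪adjoint V1 w, y⟫_ℂ = ⟪w, V1 y⟫_ℂ :=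
    fun w y => adjoint_inner_left V1 y w
  have f2 : ∀ w y : H, ⟪adjoint V2 w, y⟫_ℂ = ⟪w, V2 y⟫_ℂ :=
    fun w y => adjoint_inner_left V2 y w
  have hCsa : IsSelfAdjoint C := by
    rw [ContinuousLinearMap.isSelfAdjoint_iff_isSymmetric]
    intro x y
    simp only [ContinuousLinearMap.coe_coe, hCapply, inner_sub_left, inner_add_left,
      inner_sub_right, inner_add_right, e1, e2, f1, f2, hc, ha]
  -- the orthogonal projection set-up
  haveI hop : W1.HasOrthogonalProjection := by
    rw [hW1]
    haveI : CompleteSpace (LinearMap.ker (adjoint V1 : H →ₗ[ℂ] H)) :=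
      (ContinuousLinearMap.isClosed_ker (adjoint V1)).completeSpace_coe
    infer_instance
  have hP : ∀ z, projCLM W1 z = (W1.orthogonalProjectionOnto z : H) := by
    intro z
    rw [projCLM, dif_pos hop]
    rfl
  have pyth : ∀ z : H, ‖z‖ ^ 2
      = ‖(W1.orthogonalProjectionOnto z : H)‖ ^ 2 + ‖z - W1.orthogonalProjectionOnto z‖ ^ 2 := by
    intro z
    have ho : ⟪(W1.orthogonalProjectionOnto z : H), z - W1.orthogonalProjectionOnto z⟫_ℂ = 0 :=
      Submodule.inner_right_of_mem_orthogonal (W1.orthogonalProjectionOnto z).2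
        (Submodule.sub_starProjection_mem_orthogonal z)
    have hz : z = (W1.orthogonalProjectionOnto z : H) + (z - W1.orthogonalProjectionOnto z) := by abel
    calc ‖z‖ ^ 2 = ‖(W1.orthogonalProjectionOnto z : H) + (z - W1.orthogonalProjectionOnto z)‖ ^ 2 := by
          rw [← hz]
      _ = _ := by rw [norm_add_sq (𝕜 := ℂ), ho]; simp
  tfae_have 1 → 2 := by
    intro hpos x hx
    have hx0 : adjoint V1 x = 0 := (hmem x).mp hx
    rw [hmem]
    have h := hpos.2 (V2 x)
    rw [reApplyInnerSelf_apply, hinner, a2v2, hx0, hV2] at h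
    simp only [norm_zero] at h
    have h6 : ‖adjoint V1 (V2 x)‖ ^ 2 = 0 := le_antisymm (by nlinarith) (sq_nonneg _)
    exact norm_eq_zero.mp (pow_eq_zero_iff two_ne_zero |>.mp h6)
  tfae_have 2 → 3 := by
    intro h
    ext x
    have hx : x - V1 (adjoint V1 x) ∈ W1 := by
      rw [hmem, map_sub, a1v1, sub_self]
    have h2 := (hmem _).mp (h _ hx)
    simp only [map_sub, ← hc, a1v1, sub_eq_zero] at h2
    simpa [comp_apply] using h2
  tfae_have 3 → 4 := by
    intro h3
    have h3p : ∀ x, adjoint V1 (V2 x) = V2 (adjoint V1 x) := fun x => DFunLike.congr_fun h3 x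
    have h3' : ∀ x, adjoint V2 (V1 x) = V1 (adjoint V2 x) := by
      have h4 := congrArg ContinuousLinearMap.adjoint h3
      rw [adjoint_comp, adjoint_comp, adjoint_adjoint] at h4
      exact fun x => DFunLike.congr_fun h4 x
    refine ⟨hCsa, ?_⟩
    unfold IsIdempotentElem
    ext x
    rw [ContinuousLinearMap.mul_apply]
    simp only [hCapply, map_sub, map_add, a1v1, a2v2, h3p, h3', ha, hc]
    abel
  tfae_have 4 → 1 := by
    rintro ⟨hsa, hid⟩
    refine ⟨ContinuousLinearMap.isSelfAdjoint_iff_isSymmetric.mp hsa, fun x => ?_⟩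
    rw [reApplyInnerSelf_apply]
    have key : RCLike.re ⟪C x, x⟫_ℂ = ‖C x‖ ^ 2 := by
      calc RCLike.re ⟪C x, x⟫_ℂ = RCLike.re ⟪(C * C) x, x⟫_ℂ := by rw [hid]
        _ = RCLike.re ⟪C (C x), x⟫_ℂ := by rw [ContinuousLinearMap.mul_apply]
        _ = RCLike.re ⟪C x, adjoint C x⟫_ℂ := by
            rw [← adjoint_inner_right C (C x) x]
        _ = RCLike.re ⟪C x, C x⟫_ℂ := by rw [isSelfAdjoint_iff'.mp hsa]
        _ = ‖C x‖ ^ 2 := inner_self_eq_norm_sq _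
    rw [key]
    positivity
  tfae_have 2 → 5 := by
    intro h η hη
    rw [hP, ← Submodule.starProjection_apply, Submodule.starProjection_eq_self_iff.mpr (h η hη), hV2]
  tfae_have 5 → 2 := by
    intro h x hx
    have h1 := h x hx
    rw [hP] at h1
    have h2 := pyth (V2 x)
    rw [h1, hV2] at h2
    have h3 : ‖V2 x - W1.orthogonalProjectionOnto (V2 x)‖ ^ 2 = 0 := by linarith
    have h4 : V2 x = (W1.orthogonalProjectionOnto (V2 x) : H) :=
      sub_eq_zero.mp (norm_eq_zero.mp (pow_eq_zero_iff two_ne_zero |>.mp h3))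
    rw [h4]
    exact (W1.orthogonalProjectionOnto (V2 x)).2
  tfae_finish
end

section
/- Let (V1, V2) be commuting isometries on H such that V2 is a pure isometry. If the defect operator C(V1,V2) = I − V1V1* − V2V2* + V1V2V1*V2* is negative semidefinite (C(V1,V2) ≤ 0), then C(V1,V2) = 0. Moreover, in that case ker V1* = {0}, i.e., V1 is unitary. -/
open ContinuousLinearMap Filter Topology Metric
open scoped InnerProductSpace

theorem stmt_17 {H : Type*} [NormedAddCommGroup H] [InnerProductSpace ℂ H] [CompleteSpace H]
    (V1 V2 : H →L[ℂ] H) (hV1 : ∀ x, ‖V1 x‖ = ‖x‖) (hV2 : ∀ x, ‖V2 x‖ = ‖x‖)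
    (hcomm : V1 ∘L V2 = V2 ∘L V1)
    (hpure : (⨅ m : ℕ, LinearMap.range ((V2 ^ m : H →L[ℂ] H) : H →ₗ[ℂ] H))
      = (⊥ : Submodule ℂ H))
    (C : H →L[ℂ] H)
    (hCdef : C = 1 - V1 ∘L adjoint V1 - V2 ∘L adjoint V2
        + V1 ∘L V2 ∘L adjoint V1 ∘L adjoint V2)
    (hneg : (-C).IsPositive) :
    C = 0 ∧ LinearMap.ker ((adjoint V1 : H →L[ℂ] H) : H →ₗ[ℂ] H) = (⊥ : Submodule ℂ H) := by
  -- inner product preservation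
  have hinner2 : ∀ x y : H, ⟪V2 x, V2 y⟫_ℂ = ⟪x, y⟫_ℂ := by
    intro x y
    exact (⟨V2.toLinearMap, hV2⟩ : H →ₗᵢ[ℂ] H).inner_map_map x y
  have hinner1 : ∀ x y : H, ⟪V1 x, V1 y⟫_ℂ = ⟪x, y⟫_ℂ := by
    intro x y
    exact (⟨V1.toLinearMap, hV1⟩ : H →ₗᵢ[ℂ] H).inner_map_map x y
  -- V* V = 1 pointwise
  have h1 : ∀ x : H, adjoint V1 (V1 x) = x := by
    intro x
    apply ext_inner_right ℂ
    intro v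
    rw [adjoint_inner_left, hinner1]
  have h2 : ∀ x : H, adjoint V2 (V2 x) = x := by
    intro x
    apply ext_inner_right ℂ
    intro v
    rw [adjoint_inner_left, hinner2]
  -- adjoint commutation
  have hadjcomm : ∀ x : H, adjoint V1 (adjoint V2 x) = adjoint V2 (adjoint V1 x) := by
    intro x
    have h : adjoint V2 ∘L adjoint V1 = adjoint V1 ∘L adjoint V2 := by
      rw [← adjoint_comp, ← adjoint_comp, hcomm]
    have := congrFun (congrArg (fun T : H →L[ℂ] H => (T : H → H)) h) x
    simpa using this.symm
  -- commutation pointwise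
  have hc : ∀ w : H, V1 (V2 w) = V2 (V1 w) := by
    intro w
    have := congrFun (congrArg (fun T : H →L[ℂ] H => (T : H → H)) hcomm) w
    simpa using this
  -- re ⟪V2 (V2* x), x⟫ = ‖V2* x‖²
  have hre2 : ∀ x : H, RCLike.re ⟪V2 (adjoint V2 x), x⟫_ℂ = ‖adjoint V2 x‖ ^ 2 := by
    intro x
    rw [← adjoint_inner_right, inner_self_eq_norm_sq]
  -- ‖V2* x‖ ≤ ‖x‖
  have hadj2_le : ∀ x : H, ‖adjoint V2 x‖ ≤ ‖x‖ := by
    intro x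
    have hsq : (‖adjoint V2 x‖ : ℝ) ^ 2 ≤ ‖adjoint V2 x‖ * ‖x‖ := by
      calc (‖adjoint V2 x‖ : ℝ) ^ 2 = RCLike.re ⟪V2 (adjoint V2 x), x⟫_ℂ := (hre2 x).symm
        _ ≤ ‖V2 (adjoint V2 x)‖ * ‖x‖ := re_inner_le_norm _ _
        _ = ‖adjoint V2 x‖ * ‖x‖ := by rw [hV2]
    nlinarith [norm_nonneg (adjoint V2 x), norm_nonneg x]
  -- key step: x ∈ ker V1* implies V2 V2* x = x
  have hkey : ∀ x : H, adjoint V1 x = 0 → V2 (adjoint V2 x) = x := by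
    intro x hx
    have hCx : C x = x - V2 (adjoint V2 x) := by
      rw [hCdef]
      simp [ContinuousLinearMap.add_apply, ContinuousLinearMap.sub_apply, comp_apply,
        one_apply, hadjcomm, hx]
    have hre : RCLike.re ⟪C x, x⟫_ℂ = ‖x‖ ^ 2 - ‖adjoint V2 x‖ ^ 2 := by
      rw [hCx, inner_sub_left, map_sub, inner_self_eq_norm_sq, hre2]
    have hpos := hneg.2 x
    rw [ContinuousLinearMap.reApplyInnerSelf, ContinuousLinearMap.neg_apply,
      inner_neg_left, map_neg] at hpos
    have hge : ‖x‖ ^ 2 ≤ ‖adjoint V2 x‖ ^ 2 := by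
      rw [hre] at hpos; linarith
    have hnorm : ‖adjoint V2 x‖ = ‖x‖ := by
      nlinarith [hadj2_le x, norm_nonneg (adjoint V2 x), norm_nonneg x]
    have hz : ‖V2 (adjoint V2 x) - x‖ ^ 2 = 0 := by
      rw [@norm_sub_sq ℂ, hre2, hV2, hnorm]
      ring
    have : V2 (adjoint V2 x) - x = 0 := by
      rw [← norm_eq_zero]
      exact (pow_eq_zero_iff two_ne_zero).mp hz
    exact sub_eq_zero.mp this
  -- elements of ker V1* are in every range V2^m
  have hmem : ∀ m : ℕ, ∀ x : H, adjoint V1 x = 0 → ∃ y, adjoint V1 y = 0 ∧ (V2 ^ m) y = x := by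
    intro m
    induction m with
    | zero => intro x hx; exact ⟨x, hx, by simp⟩
    | succ n ih =>
      intro x hx
      have hx' : adjoint V1 (adjoint V2 x) = 0 := by rw [hadjcomm, hx, map_zero]
      obtain ⟨y, hy0, hy⟩ := ih (adjoint V2 x) hx'
      refine ⟨y, hy0, ?_⟩
      rw [pow_succ', ContinuousLinearMap.mul_apply, hy]
      exact hkey x hx
  -- ker V1* = {0}
  have hK : ∀ x : H, adjoint V1 x = 0 → x = 0 := by
    intro x hx
    have hx' : x ∈ (⨅ m : ℕ, LinearMap.range ((V2 ^ m : H →L[ℂ] H) : H →ₗ[ℂ] H)) := by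
      rw [Submodule.mem_iInf]
      intro m
      obtain ⟨y, _, hy⟩ := hmem m x hx
      exact ⟨y, hy⟩
    rw [hpure] at hx'
    simpa using hx'
  -- V1 V1* = 1
  have hQ : ∀ y : H, V1 (adjoint V1 y) = y := by
    intro y
    have hz : adjoint V1 (y - V1 (adjoint V1 y)) = 0 := by
      simp [map_sub, h1]
    have := hK _ hz
    exact (sub_eq_zero.mp this).symm
  constructor
  · ext y
    rw [hCdef]
    simp only [ContinuousLinearMap.add_apply, ContinuousLinearMap.sub_apply, comp_apply,
      ContinuousLinearMap.one_apply, ContinuousLinearMap.zero_apply, hc, hQ]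
    abel
  · rw [Submodule.eq_bot_iff]
    intro x hx
    exact hK x (LinearMap.mem_ker.mp hx)
end

section
/- Let (V1, V2) be commuting isometries on H such that the wandering subspace W1 = ker V1* is finite dimensional. If the defect operator C(V1,V2) ≤ 0, then C(V1,V2) = 0. (Key step: W1 ⊆ V2W1 together with dim W1 < ∞ and V2 isometric forces W1 = V2W1.) -/
open ContinuousLinearMap Filter Topology Metric
open scoped InnerProductSpace

section aux
variable {H : Type*} [NormedAddCommGroup H] [InnerProductSpace ℂ H] [CompleteSpace H]

/-- For a self-adjoint idempotent, ⟪R x, x⟫ = ‖R x‖². -/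
lemma aux_inner_proj (R : H →L[ℂ] H) (hadj : adjoint R = R) (hidem : R ∘L R = R) (x : H) :
    ⟪R x, x⟫_ℂ = (‖R x‖ : ℂ) ^ 2 := by
  have h1 : ⟪(adjoint R) (R x), x⟫_ℂ = ⟪R x, R x⟫_ℂ := adjoint_inner_left R x (R x)
  rw [hadj] at h1
  have h2 : R (R x) = R x := congrFun (congrArg DFunLike.coe hidem) x
  rw [h2] at h1
  rw [h1, inner_self_eq_norm_sq_to_K]
  norm_cast

/-- Self-adjoint idempotents are contractions. -/
lemma aux_proj_norm_le (R : H →L[ℂ] H) (hadj : adjoint R = R) (hidem : R ∘L R = R) (x : H) :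
    ‖R x‖ ≤ ‖x‖ := by
  have h := aux_inner_proj R hadj hidem x
  have hre : RCLike.re ⟪R x, x⟫_ℂ = ‖R x‖ ^ 2 := by
    rw [h, ← Complex.ofReal_pow]; exact Complex.ofReal_re _
  have hcs := re_inner_le_norm (𝕜 := ℂ) (R x) x
  rw [hre] at hcs
  nlinarith [norm_nonneg (R x), norm_nonneg x]

/-- Equality case: if ‖x‖ ≤ ‖R x‖ then x is fixed by R. -/
lemma aux_proj_fix (R : H →L[ℂ] H) (hadj : adjoint R = R) (hidem : R ∘L R = R)
    {x : H} (hx : ‖x‖ ≤ ‖R x‖) : R x = x := by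
  have h := aux_inner_proj R hadj hidem x
  have hre : RCLike.re ⟪x, R x⟫_ℂ = ‖R x‖ ^ 2 := by
    rw [← inner_conj_symm, h]
    norm_num [← Complex.ofReal_pow]
  have hns := norm_sub_sq (𝕜 := ℂ) x (R x)
  rw [hre] at hns
  have hle : ‖R x‖ ≤ ‖x‖ := aux_proj_norm_le R hadj hidem x
  have heq : ‖R x‖ = ‖x‖ := le_antisymm hle hx
  have h0 : ‖x - R x‖ ^ 2 = 0 := by rw [hns, heq]; ring
  have h1 : x - R x = 0 := by
    have := pow_eq_zero_iff (n := 2) (by norm_num) |>.mp h0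
    exact norm_eq_zero.mp this
  exact (sub_eq_zero.mp h1).symm

end aux

theorem stmt_18 {H : Type*} [NormedAddCommGroup H] [InnerProductSpace ℂ H] [CompleteSpace H]
    (V1 V2 : H →L[ℂ] H) (hV1 : ∀ x, ‖V1 x‖ = ‖x‖) (hV2 : ∀ x, ‖V2 x‖ = ‖x‖)
    (hcomm : V1 ∘L V2 = V2 ∘L V1)
    (W1 : Submodule ℂ H) (hW1 : W1 = LinearMap.ker (adjoint V1 : H →ₗ[ℂ] H))
    (hfin : FiniteDimensional ℂ W1)
    (C : H →L[ℂ] H)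
    (hCdef : C = 1 - V1 ∘L adjoint V1 - V2 ∘L adjoint V2
        + V1 ∘L V2 ∘L adjoint V1 ∘L adjoint V2)
    (hneg : (-C).IsPositive) :
    C = 0 := by
  have hinner1 : ∀ x y : H, ⟪V1 x, V1 y⟫_ℂ = ⟪x, y⟫_ℂ := fun x y =>
    LinearIsometry.inner_map_map ⟨V1.toLinearMap, hV1⟩ x y
  have hinner2 : ∀ x y : H, ⟪V2 x, V2 y⟫_ℂ = ⟪x, y⟫_ℂ := fun x y =>
    LinearIsometry.inner_map_map ⟨V2.toLinearMap, hV2⟩ x y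
  have hA1V1 : adjoint V1 ∘L V1 = 1 := by
    ext x
    apply ext_inner_right ℂ
    intro y
    rw [comp_apply, adjoint_inner_left, hinner1]
    simp
  have hA2V2 : adjoint V2 ∘L V2 = 1 := by
    ext x
    apply ext_inner_right ℂ
    intro y
    rw [comp_apply, adjoint_inner_left, hinner2]
    simp
  set a := V1 with ha
  set b := adjoint V1 with hb
  set c := V2 with hc
  set d := adjoint V2 with hd
  have hba : b * a = 1 := hA1V1
  have hdc : d * c = 1 := hA2V2
  have hac : a * c = c * a := hcomm
  have hstara : star a = b := star_eq_adjoint a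
  have hstarc : star c = d := star_eq_adjoint c
  have hstarb : star b = a := by rw [← hstara, star_star]
  have hstard : star d = c := by rw [← hstarc, star_star]
  have hadjd : adjoint d = c := by rw [← star_eq_adjoint]; exact hstard
  set P : H →L[ℂ] H := 1 - a * b with hP
  set Q : H →L[ℂ] H := c * P * d with hQ
  -- P, Q are self-adjoint idempotents
  have hPstar : star P = P := by
    rw [hP, star_sub, star_one, star_mul, hstara, hstarb]
  have hPadj : adjoint P = P := by rw [← star_eq_adjoint]; exact hPstar
  have hPidem : P * P = P := by
    rw [hP]
    have h1 : (1 - a * b) * (1 - a * b) = 1 - a * b + a * (b * a - 1) * b := by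
      noncomm_ring
    rw [h1, hba]
    noncomm_ring
  have hQstar : star Q = Q := by
    rw [hQ, star_mul, star_mul, hstarc, hstard, hPstar, mul_assoc]
  have hQadj : adjoint Q = Q := by rw [← star_eq_adjoint]; exact hQstar
  have hQidem : Q * Q = Q := by
    rw [hQ]
    have h1 : c * P * d * (c * P * d) = c * P * (d * c) * P * d := by noncomm_ring
    rw [h1, hdc]
    have h2 : c * P * 1 * P * d = c * (P * P) * d := by noncomm_ring
    rw [h2, hPidem]
  -- C = P - Q
  have hQexp : Q = c * d - c * (a * b) * d := by
    rw [hQ, hP, mul_sub, mul_one, sub_mul]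
  have hCdef' : C = 1 - a * b - c * d + a * (c * (b * d)) := hCdef
  have h3 : a * (c * (b * d)) = c * (a * b) * d := by
    rw [← mul_assoc, hac]
    noncomm_ring
  have hCPQ : C = P - Q := by
    rw [hCdef', h3, hP, hQexp]
    abel
  -- c * d is a self-adjoint idempotent
  have hcdstar : star (c * d) = c * d := by rw [star_mul, hstarc, hstard]
  have hcdadj : adjoint (c * d) = c * d := by rw [← star_eq_adjoint]; exact hcdstar
  have hcdidem : (c * d) ∘L (c * d) = c * d := by
    show (c * d) * (c * d) = c * d
    rw [mul_assoc, ← mul_assoc d c, hdc, one_mul]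
  have hPidem' : P ∘L P = P := hPidem
  have hPn := fun x => aux_proj_norm_le P hPadj hPidem' x
  have hdn : ∀ x, ‖d x‖ ≤ ‖x‖ := by
    intro x
    have h1 : ‖c (d x)‖ = ‖d x‖ := hV2 (d x)
    have h2 : ‖(c * d) x‖ ≤ ‖x‖ := aux_proj_norm_le (c * d) hcdadj hcdidem x
    have h3 : (c * d) x = c (d x) := rfl
    rw [h3, h1] at h2
    exact h2
  -- key step: for x fixed by P, d x is fixed by P and c (d x) = x
  have hkey : ∀ x : H, P x = x → (P (d x) = d x ∧ c (d x) = x) := by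
    intro x hx
    have hpos := hneg.2 x
    rw [ContinuousLinearMap.reApplyInnerSelf_apply] at hpos
    have hnegapp : (-C) x = -(C x) := rfl
    rw [hnegapp, inner_neg_left, map_neg] at hpos
    have hCx : RCLike.re ⟪C x, x⟫_ℂ ≤ 0 := by linarith
    have hCapp : C x = x - Q x := by
      rw [hCPQ]
      have : (P - Q) x = P x - Q x := rfl
      rw [this, hx]
    have hQxx : ⟪Q x, x⟫_ℂ = (‖P (d x)‖ : ℂ) ^ 2 := by
      have h0 : Q x = (adjoint d) (P (d x)) := by rw [hadjd]; rfl
      rw [h0, adjoint_inner_left]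
      exact aux_inner_proj P hPadj hPidem' (d x)
    have hre : (‖x‖ : ℝ) ^ 2 - ‖P (d x)‖ ^ 2 ≤ 0 := by
      have heq : RCLike.re ⟪C x, x⟫_ℂ = ‖x‖ ^ 2 - ‖P (d x)‖ ^ 2 := by
        rw [hCapp, inner_sub_left, hQxx, inner_self_eq_norm_sq_to_K]
        norm_num [← Complex.ofReal_pow]
      rw [heq] at hCx
      exact hCx
    have h1 : ‖x‖ ≤ ‖P (d x)‖ := by nlinarith [norm_nonneg x, norm_nonneg (P (d x))]
    have h2 : ‖P (d x)‖ ≤ ‖d x‖ := hPn (d x)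
    have hfix1 : P (d x) = d x := aux_proj_fix P hPadj hPidem' ((hdn x).trans h1)
    have hfix2 : (c * d) x = x := by
      apply aux_proj_fix (c * d) hcdadj hcdidem
      have : ‖(c * d) x‖ = ‖d x‖ := hV2 (d x)
      rw [this]
      exact h1.trans h2
    exact ⟨hfix1, hfix2⟩
  -- membership in W1 ↔ fixed by P
  have hmem : ∀ x : H, x ∈ W1 ↔ P x = x := by
    intro x
    rw [hW1, LinearMap.mem_ker]
    constructor
    · intro hx
      have h0 : P x = x - a (b x) := rfl
      rw [h0, show b x = 0 from hx, map_zero, sub_zero]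
    · intro hx
      have h0 : x - a (b x) = x := hx
      have h1 : a (b x) = 0 := by
        have := sub_eq_self.mp h0
        exact this
      have h2 : ‖b x‖ = 0 := by rw [← hV1 (b x), h1, norm_zero]
      exact norm_eq_zero.mp h2
  have hdW : ∀ x ∈ W1, d x ∈ W1 := fun x hx =>
    (hmem _).2 ((hkey x ((hmem x).1 hx)).1)
  have hcdid : ∀ x ∈ W1, c (d x) = x := fun x hx => (hkey x ((hmem x).1 hx)).2
  -- finite dimensionality: d restricted to W1 is injective, hence surjective
  let f : W1 →ₗ[ℂ] W1 := (d : H →ₗ[ℂ] H).restrict hdW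
  have hinj : Function.Injective f := by
    intro u v huv
    have h0 : d (u : H) = d (v : H) := congrArg Subtype.val huv
    have h1 : (u : H) = (v : H) := by
      rw [← hcdid u u.2, ← hcdid v v.2, h0]
    exact Subtype.ext h1
  have hsurj : Function.Surjective f := (LinearMap.injective_iff_surjective).1 hinj
  -- hence V2 maps W1 into W1
  have hcW : ∀ w ∈ W1, c w ∈ W1 := by
    intro w hw
    obtain ⟨x, hxeq⟩ := hsurj ⟨w, hw⟩
    have h0 : d (x : H) = w := congrArg Subtype.val hxeq
    have h1 : c w = (x : H) := by rw [← h0]; exact hcdid x x.2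
    rw [h1]
    exact x.2
  -- P fixes W1, Q fixes W1, ranges
  have hPrange : ∀ x : H, P x ∈ W1 := fun x =>
    (hmem _).2 (congrFun (congrArg DFunLike.coe hPidem) x)
  have hQP : Q * P = P := by
    ext x
    show Q (P x) = P x
    have hw := hPrange x
    have h0 : Q (P x) = c (P (d (P x))) := rfl
    rw [h0, (hkey (P x) ((hmem _).1 hw)).1]
    exact (hkey (P x) ((hmem _).1 hw)).2
  have hPQ : P * Q = Q := by
    ext x
    show P (Q x) = Q x
    have h0 : Q x = c (P (d x)) := rfl
    have h1 : Q x ∈ W1 := by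
      rw [h0]
      exact hcW _ (hPrange (d x))
    exact (hmem _).1 h1
  have hPQ' : P * Q = P := by
    have h0 := congrArg star hQP
    rw [star_mul, hPstar, hQstar] at h0
    exact h0
  have hQeqP : Q = P := by rw [← hPQ, hPQ']
  rw [hCPQ, hQeqP, sub_self]
end
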